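/- Let $\Gamma$ be a group acting on an infinite set $I$ such that every orbit is infinite. Then for any two finite subsets $A, B \subseteq I$ there exists $s \in \Gamma$ such that $sA \cap B = \emptyset$. -/

import Mathlib

open scoped Pointwise

/-- If all orbits of `Γ` acting on the infinite set `I` are infinite,
then any finite subset can be moved off any other finite subset. -/
theorem stmt1 {Γ I : Type*} [Group Γ] [MulAction Γ I] [Infinite I]
    (horb : ∀ i : I, (MulAction.orbit Γ i).Infinite)
    (A B : Set I) (hA : A.Finite) (hB : B.Finite) :
    ∃ s : Γ, (s • A) ∩ B = ∅ := by
  classical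
  by_contra hcon
  push_neg at hcon
  -- index set: pairs (a, b) ∈ A × B
  set ι := I × I
  have hchoice : ∀ p : ι, ∃ g : Γ, (∃ g' : Γ, g' • p.1 = p.2) → g • p.1 = p.2 := by
    intro p
    by_cases h : ∃ g' : Γ, g' • p.1 = p.2
    · obtain ⟨g', hg'⟩ := h
      exact ⟨g', fun _ => hg'⟩
    · exact ⟨1, fun h' => absurd h' h⟩
  choose gfun hgfun using hchoice
  set s : Finset ι := (hA.toFinset ×ˢ hB.toFinset)
  set H : ι → Subgroup Γ := fun p => MulAction.stabilizer Γ p.1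
  have hcovers : ⋃ i ∈ s, (gfun i) • (H i : Set Γ) = Set.univ := by
    ext g
    simp only [Set.mem_univ, iff_true, Set.mem_iUnion]
    obtain ⟨x, hx1, hx2⟩ := hcon g
    obtain ⟨a, ha, rfl⟩ := hx1
    refine ⟨(a, g • a), ?_, ?_⟩
    · exact Finset.mem_product.mpr ⟨hA.mem_toFinset.mpr ha, hB.mem_toFinset.mpr hx2⟩
    · have hga : gfun (a, g • a) • a = g • a := hgfun (a, g • a) ⟨g, rfl⟩
      rw [mem_leftCoset_iff]
      have : ((gfun (a, g • a))⁻¹ * g) • a = a := by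
        rw [mul_smul, inv_smul_eq_iff]; exact hga.symm
      exact this
  obtain ⟨k, _, hk⟩ := Subgroup.exists_finiteIndex_of_leftCoset_cover hcovers
  -- but stabilizers have infinite index since orbits are infinite
  have : (MulAction.orbit Γ k.1).Finite := by
    have : Finite (Γ ⧸ MulAction.stabilizer Γ k.1) := by
      have := hk.index_ne_zero
      exact Subgroup.finite_quotient_of_finiteIndex
    have e := MulAction.orbitEquivQuotientStabilizer Γ k.1
    exact Set.finite_coe_iff.mp (Finite.of_equiv _ e.symm)
  exact horb k.1 this
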